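/- For every positive integer n and every s with Re(s) = 0 is the only possible location of zeros of the divisor function σ_s(n) = ∑_{d | n} d^s viewed as a function of complex s: if σ_s(n) = 0 then Re(s) = 0. -/

import Mathlib

open Nat ArithmeticFunction Finset
open scoped ArithmeticFunction.zeta

theorem stmt_4 (n : ℕ) (hn : 0 < n) (s : ℂ)
    (h : ∑ d ∈ n.divisors, (d : ℂ) ^ s = 0) : s.re = 0 := by
  by_contra hre
  have hs : s ≠ 0 := fun h0 => hre (by simp [h0])
  -- the arithmetic function d ↦ d^s
  set f : ArithmeticFunction ℂ := ⟨fun d => (d : ℂ) ^ s, by simp [Complex.zero_cpow hs]⟩ with hf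
  have hfmul : ∀ m k : ℕ, f (m * k) = f m * f k := by
    intro m k
    simp only [hf, ArithmeticFunction.coe_mk]
    push_cast
    rcases Nat.eq_zero_or_pos m with hm | hm
    · simp [hm, Complex.zero_cpow hs]
    rcases Nat.eq_zero_or_pos k with hk | hk
    · simp [hk, Complex.zero_cpow hs]
    have := Complex.mul_cpow_ofReal_nonneg (by positivity : (0:ℝ) ≤ (m:ℝ))
      (by positivity : (0:ℝ) ≤ (k:ℝ)) s
    push_cast at this
    exact this
  have hfm : f.IsMultiplicative :=
    ⟨by simp [hf], fun _ => hfmul _ _⟩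
  have hgm : (f * ζ).IsMultiplicative := hfm.mul isMultiplicative_zeta.natCast
  have hg : (f * ζ) n = 0 := by
    rw [coe_mul_zeta_apply]; simpa [hf] using h
  rw [hgm.multiplicative_factorization _ hn.ne'] at hg
  obtain ⟨p, hp, hp0⟩ := Finset.prod_eq_zero_iff.mp hg
  have hpp : p.Prime := Nat.prime_of_mem_primeFactors hp
  set e := n.factorization p with he
  dsimp only at hp0
  rw [coe_mul_zeta_apply, Nat.sum_divisors_prime_pow hpp] at hp0
  -- hp0 : ∑ k in range (e+1), f (p^k) = 0
  have hz : ∀ k : ℕ, f (p ^ k) = ((p : ℂ) ^ s) ^ k := by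
    intro k
    induction k with
    | zero => simpa using hfm.1
    | succ k ih =>
      rw [pow_succ, hfmul, ih, pow_succ]
      rfl
  simp only [hz] at hp0
  set z : ℂ := (p : ℂ) ^ s with hzdef
  have hz1 : z ≠ 1 := by
    intro h1
    rw [h1] at hp0
    simp at hp0
    exact Nat.cast_add_one_ne_zero e hp0
  have hgeom : z ^ (e + 1) = 1 := by
    rw [geom_sum_eq hz1] at hp0
    rcases div_eq_zero_iff.mp hp0 with h1 | h2
    · exact sub_eq_zero.mp h1
    · exact absurd (sub_eq_zero.mp h2) hz1
  have habs : ‖z‖ = 1 := by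
    have h1 : ‖z‖ ^ (e + 1) = 1 := by
      rw [← norm_pow, hgeom, norm_one]
    have hnn := norm_nonneg z
    rcases lt_trichotomy ‖z‖ 1 with hlt | heq | hgt
    · have := pow_lt_one₀ hnn hlt (by omega : e + 1 ≠ 0); linarith
    · exact heq
    · have := one_lt_pow₀ hgt (by omega : e + 1 ≠ 0); linarith
  have hppos : (0:ℝ) < (p:ℝ) := by exact_mod_cast hpp.pos
  rw [hzdef, show ((p:ℕ):ℂ) = ((p:ℝ):ℂ) by push_cast; rfl,
    Complex.norm_cpow_eq_rpow_re_of_pos hppos] at habs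
  have : s.re = 0 := by
    have hlog := congrArg Real.log habs
    rw [Real.log_rpow hppos, Real.log_one] at hlog
    have : Real.log p ≠ 0 := Real.log_ne_zero_of_pos_of_ne_one hppos (by exact_mod_cast hpp.one_lt.ne')
    exact (mul_eq_zero.mp hlog).resolve_right this
  exact hre this
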